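/- Let (u,v,w) be a G₂-frame in ℝ⁷ (orthonormal with φ₀(u,v,w)=0), R = χ(u,v,w), R′ = (u×v+v×w+w×u)/√3, R″ = (u+v+w)/√3. Then for all real a, b, c with a+b+c = 0: √3 R″×(au+bv+cw) = (b−a)(u×v) + (c−b)(v×w) + (a−c)(w×u); moreover R″×R = R′. -/

import Mathlib

open scoped RealInnerProductSpace

noncomputable section

/-- ℝ⁷ with its Euclidean inner product. -/
abbrev V7 := EuclideanSpace ℝ (Fin 7)

/-- The standard G₂ 3-form φ₀ = e¹²³+e¹⁴⁵+e¹⁶⁷+e²⁴⁶−e²⁵⁷−e³⁴⁷−e³⁵⁶ on ℝ⁷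
(indices shifted to 0-based), written as a trilinear alternating function. -/
def phi0 : (Fin 3 → V7) → ℝ := fun v =>
  let m : Fin 7 → Fin 7 → Fin 7 → ℝ := fun i j k =>
    Matrix.det !![v 0 i, v 0 j, v 0 k; v 1 i, v 1 j, v 1 k; v 2 i, v 2 j, v 2 k]
  m 0 1 2 + m 0 3 4 + m 0 5 6 + m 1 3 5 - m 1 4 6 - m 2 3 6 - m 2 4 5

/-- The 4-form ∗φ₀ = e⁴⁵⁶⁷+e²³⁶⁷+e²³⁴⁵+e¹³⁵⁷−e¹³⁴⁶−e¹²⁵⁶−e¹²⁴⁷ (0-based indices). -/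
def starPhi0 : (Fin 4 → V7) → ℝ := fun v =>
  let m : Fin 7 → Fin 7 → Fin 7 → Fin 7 → ℝ := fun i j k l =>
    Matrix.det !![v 0 i, v 0 j, v 0 k, v 0 l; v 1 i, v 1 j, v 1 k, v 1 l;
                  v 2 i, v 2 j, v 2 k, v 2 l; v 3 i, v 3 j, v 3 k, v 3 l]
  m 3 4 5 6 + m 1 2 5 6 + m 1 2 3 4 + m 0 2 4 6 - m 0 2 3 5 - m 0 1 4 5 - m 0 1 3 6

/-- The cross product on ℝ⁷: the unique vector with ⟨u×v, z⟩ = φ₀(u,v,z) for all z. -/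
def cross (u v : V7) : V7 := WithLp.toLp 2 (fun i => phi0 ![u, v, EuclideanSpace.single i 1])

/-- The triple cross product χ: the unique vector with ⟨χ(u,v,w), z⟩ = ∗φ₀(u,v,w,z). -/
def chi (u v w : V7) : V7 := WithLp.toLp 2 (fun i => starPhi0 ![u, v, w, EuclideanSpace.single i 1])

/-- Interior product ξ⌟α : contraction of a (k+1)-form with ξ in its first slot. -/
def iprod {k : ℕ} (ξ : V7) (α : (Fin (k + 1) → V7) → ℝ) : (Fin k → V7) → ℝ :=
  fun v => α (Fin.cons ξ v)

/-- Wedge product of alternating forms (determinant convention). -/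
def wedge {p q : ℕ} (α : (Fin p → V7) → ℝ) (β : (Fin q → V7) → ℝ) :
    (Fin (p + q) → V7) → ℝ := fun v =>
  (1 / ((p.factorial : ℝ) * q.factorial)) *
    ∑ σ : Equiv.Perm (Fin (p + q)), ((Equiv.Perm.sign σ : ℤ) : ℝ) *
      α (fun i => v (σ (Fin.castAdd q i))) * β (fun j => v (σ (Fin.natAdd p j)))

/-- The dual covector ξ^# = ⟨ξ,·⟩, as a 1-form. -/
def dualCov (ξ : V7) : (Fin 1 → V7) → ℝ := fun v => ⟪ξ, v 0⟫

/-- The standard volume form e¹∧⋯∧e⁷ on ℝ⁷. -/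
def vol7 : (Fin 7 → V7) → ℝ := fun v => Matrix.det (Matrix.of fun i j => v i j)



lemma detFour (a b c d e f g h i j k l m n o p : ℝ) :
    Matrix.det !![a,b,c,d; e,f,g,h; i,j,k,l; m,n,o,p] =
      a*(f*(k*p-l*o) - g*(j*p-l*n) + h*(j*o-k*n))
      - b*(e*(k*p-l*o) - g*(i*p-l*m) + h*(i*o-k*m))
      + c*(e*(j*p-l*n) - f*(i*p-l*m) + h*(i*n-j*m))
      - d*(e*(j*o-k*n) - f*(i*o-k*m) + g*(i*n-j*m)) := by
  have h1 : Fin.succAbove (2 : Fin 4) (2 : Fin 3) = 3 := rfl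
  have h2 : Fin.succAbove (1 : Fin 4) (2 : Fin 3) = 3 := rfl
  have h3 : Fin.castSucc (2 : Fin 3) = (2 : Fin 4) := rfl
  have h4 : Fin.succAbove (3 : Fin 4) (2 : Fin 3) = 2 := rfl
  simp [Matrix.det_succ_row_zero, Fin.sum_univ_succ, Matrix.det_fin_three, h1, h2, h3, h4]
  ring

lemma cross_apply_0 (x y : V7) : cross x y 0 = x 1 * y 2 - x 2 * y 1 + x 3 * y 4 - x 4 * y 3 + x 5 * y 6 - x 6 * y 5 := by
  simp [cross, phi0, Matrix.det_fin_three, EuclideanSpace.single_apply]; ring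

lemma cross_apply_1 (x y : V7) : cross x y 1 = - x 0 * y 2 + x 2 * y 0 + x 3 * y 5 - x 4 * y 6 - x 5 * y 3 + x 6 * y 4 := by
  simp [cross, phi0, Matrix.det_fin_three, EuclideanSpace.single_apply]; ring

lemma cross_apply_2 (x y : V7) : cross x y 2 = x 0 * y 1 - x 1 * y 0 - x 3 * y 6 - x 4 * y 5 + x 5 * y 4 + x 6 * y 3 := by
  simp [cross, phi0, Matrix.det_fin_three, EuclideanSpace.single_apply]; ring

lemma cross_apply_3 (x y : V7) : cross x y 3 = - x 0 * y 4 - x 1 * y 5 + x 2 * y 6 + x 4 * y 0 + x 5 * y 1 - x 6 * y 2 := by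
  simp [cross, phi0, Matrix.det_fin_three, EuclideanSpace.single_apply]; ring

lemma cross_apply_4 (x y : V7) : cross x y 4 = x 0 * y 3 + x 1 * y 6 + x 2 * y 5 - x 3 * y 0 - x 5 * y 2 - x 6 * y 1 := by
  simp [cross, phi0, Matrix.det_fin_three, EuclideanSpace.single_apply]; ring

lemma cross_apply_5 (x y : V7) : cross x y 5 = - x 0 * y 6 + x 1 * y 3 - x 2 * y 4 - x 3 * y 1 + x 4 * y 2 + x 6 * y 0 := by
  simp [cross, phi0, Matrix.det_fin_three, EuclideanSpace.single_apply]; ring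

lemma cross_apply_6 (x y : V7) : cross x y 6 = x 0 * y 5 - x 1 * y 4 - x 2 * y 3 + x 3 * y 2 + x 4 * y 1 - x 5 * y 0 := by
  simp [cross, phi0, Matrix.det_fin_three, EuclideanSpace.single_apply]; ring

lemma chi_apply_0 (x y z : V7) : chi x y z 0 = x 1 * y 3 * z 6 + x 1 * y 4 * z 5 - x 1 * y 5 * z 4 - x 1 * y 6 * z 3 + x 2 * y 3 * z 5 - x 2 * y 4 * z 6 - x 2 * y 5 * z 3 + x 2 * y 6 * z 4 - x 3 * y 1 * z 6 - x 3 * y 2 * z 5 + x 3 * y 5 * z 2 + x 3 * y 6 * z 1 - x 4 * y 1 * z 5 + x 4 * y 2 * z 6 + x 4 * y 5 * z 1 - x 4 * y 6 * z 2 + x 5 * y 1 * z 4 + x 5 * y 2 * z 3 - x 5 * y 3 * z 2 - x 5 * y 4 * z 1 + x 6 * y 1 * z 3 - x 6 * y 2 * z 4 - x 6 * y 3 * z 1 + x 6 * y 4 * z 2 := by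
  simp [chi, starPhi0, detFour, EuclideanSpace.single_apply]; ring

lemma chi_apply_1 (x y z : V7) : chi x y z 1 = - x 0 * y 3 * z 6 - x 0 * y 4 * z 5 + x 0 * y 5 * z 4 + x 0 * y 6 * z 3 - x 2 * y 3 * z 4 + x 2 * y 4 * z 3 - x 2 * y 5 * z 6 + x 2 * y 6 * z 5 + x 3 * y 0 * z 6 + x 3 * y 2 * z 4 - x 3 * y 4 * z 2 - x 3 * y 6 * z 0 + x 4 * y 0 * z 5 - x 4 * y 2 * z 3 + x 4 * y 3 * z 2 - x 4 * y 5 * z 0 - x 5 * y 0 * z 4 + x 5 * y 2 * z 6 + x 5 * y 4 * z 0 - x 5 * y 6 * z 2 - x 6 * y 0 * z 3 - x 6 * y 2 * z 5 + x 6 * y 3 * z 0 + x 6 * y 5 * z 2 := by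
  simp [chi, starPhi0, detFour, EuclideanSpace.single_apply]; ring

lemma chi_apply_2 (x y z : V7) : chi x y z 2 = - x 0 * y 3 * z 5 + x 0 * y 4 * z 6 + x 0 * y 5 * z 3 - x 0 * y 6 * z 4 + x 1 * y 3 * z 4 - x 1 * y 4 * z 3 + x 1 * y 5 * z 6 - x 1 * y 6 * z 5 + x 3 * y 0 * z 5 - x 3 * y 1 * z 4 + x 3 * y 4 * z 1 - x 3 * y 5 * z 0 - x 4 * y 0 * z 6 + x 4 * y 1 * z 3 - x 4 * y 3 * z 1 + x 4 * y 6 * z 0 - x 5 * y 0 * z 3 - x 5 * y 1 * z 6 + x 5 * y 3 * z 0 + x 5 * y 6 * z 1 + x 6 * y 0 * z 4 + x 6 * y 1 * z 5 - x 6 * y 4 * z 0 - x 6 * y 5 * z 1 := by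
  simp [chi, starPhi0, detFour, EuclideanSpace.single_apply]; ring

lemma chi_apply_3 (x y z : V7) : chi x y z 3 = x 0 * y 1 * z 6 + x 0 * y 2 * z 5 - x 0 * y 5 * z 2 - x 0 * y 6 * z 1 - x 1 * y 0 * z 6 - x 1 * y 2 * z 4 + x 1 * y 4 * z 2 + x 1 * y 6 * z 0 - x 2 * y 0 * z 5 + x 2 * y 1 * z 4 - x 2 * y 4 * z 1 + x 2 * y 5 * z 0 - x 4 * y 1 * z 2 + x 4 * y 2 * z 1 - x 4 * y 5 * z 6 + x 4 * y 6 * z 5 + x 5 * y 0 * z 2 - x 5 * y 2 * z 0 + x 5 * y 4 * z 6 - x 5 * y 6 * z 4 + x 6 * y 0 * z 1 - x 6 * y 1 * z 0 - x 6 * y 4 * z 5 + x 6 * y 5 * z 4 := by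
  simp [chi, starPhi0, detFour, EuclideanSpace.single_apply]; ring

lemma chi_apply_4 (x y z : V7) : chi x y z 4 = x 0 * y 1 * z 5 - x 0 * y 2 * z 6 - x 0 * y 5 * z 1 + x 0 * y 6 * z 2 - x 1 * y 0 * z 5 + x 1 * y 2 * z 3 - x 1 * y 3 * z 2 + x 1 * y 5 * z 0 + x 2 * y 0 * z 6 - x 2 * y 1 * z 3 + x 2 * y 3 * z 1 - x 2 * y 6 * z 0 + x 3 * y 1 * z 2 - x 3 * y 2 * z 1 + x 3 * y 5 * z 6 - x 3 * y 6 * z 5 + x 5 * y 0 * z 1 - x 5 * y 1 * z 0 - x 5 * y 3 * z 6 + x 5 * y 6 * z 3 - x 6 * y 0 * z 2 + x 6 * y 2 * z 0 + x 6 * y 3 * z 5 - x 6 * y 5 * z 3 := by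
  simp [chi, starPhi0, detFour, EuclideanSpace.single_apply]; ring

lemma chi_apply_5 (x y z : V7) : chi x y z 5 = - x 0 * y 1 * z 4 - x 0 * y 2 * z 3 + x 0 * y 3 * z 2 + x 0 * y 4 * z 1 + x 1 * y 0 * z 4 - x 1 * y 2 * z 6 - x 1 * y 4 * z 0 + x 1 * y 6 * z 2 + x 2 * y 0 * z 3 + x 2 * y 1 * z 6 - x 2 * y 3 * z 0 - x 2 * y 6 * z 1 - x 3 * y 0 * z 2 + x 3 * y 2 * z 0 - x 3 * y 4 * z 6 + x 3 * y 6 * z 4 - x 4 * y 0 * z 1 + x 4 * y 1 * z 0 + x 4 * y 3 * z 6 - x 4 * y 6 * z 3 - x 6 * y 1 * z 2 + x 6 * y 2 * z 1 - x 6 * y 3 * z 4 + x 6 * y 4 * z 3 := by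
  simp [chi, starPhi0, detFour, EuclideanSpace.single_apply]; ring

lemma chi_apply_6 (x y z : V7) : chi x y z 6 = - x 0 * y 1 * z 3 + x 0 * y 2 * z 4 + x 0 * y 3 * z 1 - x 0 * y 4 * z 2 + x 1 * y 0 * z 3 + x 1 * y 2 * z 5 - x 1 * y 3 * z 0 - x 1 * y 5 * z 2 - x 2 * y 0 * z 4 - x 2 * y 1 * z 5 + x 2 * y 4 * z 0 + x 2 * y 5 * z 1 - x 3 * y 0 * z 1 + x 3 * y 1 * z 0 + x 3 * y 4 * z 5 - x 3 * y 5 * z 4 + x 4 * y 0 * z 2 - x 4 * y 2 * z 0 - x 4 * y 3 * z 5 + x 4 * y 5 * z 3 + x 5 * y 1 * z 2 - x 5 * y 2 * z 1 + x 5 * y 3 * z 4 - x 5 * y 4 * z 3 := by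
  simp [chi, starPhi0, detFour, EuclideanSpace.single_apply]; ring


lemma V7ext {f g : V7} (h0 : f 0 = g 0) (h1 : f 1 = g 1) (h2 : f 2 = g 2)
    (h3 : f 3 = g 3) (h4 : f 4 = g 4) (h5 : f 5 = g 5) (h6 : f 6 = g 6) : f = g := by
  ext i; fin_cases i <;> assumption

lemma cross_smul_left (r : ℝ) (x y : V7) : cross (r • x) y = r • cross x y := by
  refine V7ext ?_ ?_ ?_ ?_ ?_ ?_ ?_ <;>
    simp only [cross_apply_0, cross_apply_1, cross_apply_2, cross_apply_3, cross_apply_4,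
      cross_apply_5, cross_apply_6, PiLp.smul_apply, smul_eq_mul] <;> ring

lemma part1Core (u v w : V7) (a b c : ℝ) :
    cross (u + v + w) (a • u + b • v + c • w) =
      (b - a) • cross u v + (c - b) • cross v w + (a - c) • cross w u := by
  refine V7ext ?_ ?_ ?_ ?_ ?_ ?_ ?_ <;>
    simp only [cross_apply_0, cross_apply_1, cross_apply_2, cross_apply_3, cross_apply_4,
      cross_apply_5, cross_apply_6, PiLp.add_apply, PiLp.smul_apply, smul_eq_mul] <;> ring


/-- for a G₂-frame (u,v,w) and a+b+c=0:
√3 R″×(au+bv+cw) = (b−a)(u×v)+(c−b)(v×w)+(a−c)(w×u), and R″×R = R′. -/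
theorem J_R_double_prime (u v w : V7) (h : Orthonormal ℝ ![u, v, w])
    (hφ : phi0 ![u, v, w] = 0) (R R' R'' : V7) (hR : R = chi u v w)
    (hR' : R' = (Real.sqrt 3)⁻¹ • (cross u v + cross v w + cross w u))
    (hR'' : R'' = (Real.sqrt 3)⁻¹ • (u + v + w)) :
    (∀ a b c : ℝ, a + b + c = 0 →
      Real.sqrt 3 • cross R'' (a • u + b • v + c • w) =
        (b - a) • cross u v + (c - b) • cross v w + (a - c) • cross w u) ∧
    cross R'' R = R' := by
  subst hR hR' hR''
  have h3 : Real.sqrt 3 ≠ 0 := by positivity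
  have ho := orthonormal_iff_ite.mp h
  have huu : ⟪u, u⟫ = (1 : ℝ) := by simpa using ho 0 0
  have hvv : ⟪v, v⟫ = (1 : ℝ) := by simpa using ho 1 1
  have hww : ⟪w, w⟫ = (1 : ℝ) := by simpa using ho 2 2
  have huv : ⟪u, v⟫ = (0 : ℝ) := by simpa using ho 0 1
  have hvw : ⟪v, w⟫ = (0 : ℝ) := by simpa using ho 1 2
  have huw : ⟪u, w⟫ = (0 : ℝ) := by simpa using ho 0 2
  simp only [PiLp.inner_apply, RCLike.inner_apply, conj_trivial, Fin.sum_univ_seven]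
    at huu hvv hww huv hvw huw
  have hphi : phi0 ![u, v, w] = 0 := hφ
  simp [phi0, Matrix.det_fin_three] at hphi
  have key : cross (u + v + w) (chi u v w) = cross u v + cross v w + cross w u := by
    refine V7ext ?_ ?_ ?_ ?_ ?_ ?_ ?_
    · simp only [cross_apply_0, cross_apply_1, cross_apply_2, cross_apply_3, cross_apply_4, cross_apply_5, cross_apply_6, chi_apply_0, chi_apply_1, chi_apply_2, chi_apply_3, chi_apply_4, chi_apply_5, chi_apply_6, PiLp.add_apply]
      linear_combination (v 1 * w 2 - v 2 * w 1 + v 3 * w 4 - v 4 * w 3 + v 5 * w 6 - v 6 * w 5) * huu + (- u 1 * w 2 + u 2 * w 1 - u 3 * w 4 + u 4 * w 3 - u 5 * w 6 + u 6 * w 5) * hvv + (u 1 * v 2 - u 2 * v 1 + u 3 * v 4 - u 4 * v 3 + u 5 * v 6 - u 6 * v 5) * hww + (- u 1 * w 2 + u 2 * w 1 - u 3 * w 4 + u 4 * w 3 - u 5 * w 6 + u 6 * w 5 + v 1 * w 2 - v 2 * w 1 + v 3 * w 4 - v 4 * w 3 + v 5 * w 6 - v 6 * w 5) * huv + (u 1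 * v 2 - u 1 * w 2 - u 2 * v 1 + u 2 * w 1 + u 3 * v 4 - u 3 * w 4 - u 4 * v 3 + u 4 * w 3 + u 5 * v 6 - u 5 * w 6 - u 6 * v 5 + u 6 * w 5) * hvw + (u 1 * v 2 - u 2 * v 1 + u 3 * v 4 - u 4 * v 3 + u 5 * v 6 - u 6 * v 5 + v 1 * w 2 - v 2 * w 1 + v 3 * w 4 - v 4 * w 3 + v 5 * w 6 - v 6 * w 5) * huw + (- u 0 - v 0 - w 0) * hphi
    · simp only [cross_apply_0, cross_apply_1, cross_apply_2, cross_apply_3, cross_apply_4, cross_apply_5, cross_apply_6, chi_apply_0, chi_apply_1, chi_apply_2, chi_apply_3, chi_apply_4, chi_apply_5, chi_apply_6, PiLp.add_apply]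
      linear_combination (- v 0 * w 2 + v 2 * w 0 + v 3 * w 5 - v 4 * w 6 - v 5 * w 3 + v 6 * w 4) * huu + (u 0 * w 2 - u 2 * w 0 - u 3 * w 5 + u 4 * w 6 + u 5 * w 3 - u 6 * w 4) * hvv + (- u 0 * v 2 + u 2 * v 0 + u 3 * v 5 - u 4 * v 6 - u 5 * v 3 + u 6 * v 4) * hww + (u 0 * w 2 - u 2 * w 0 - u 3 * w 5 + u 4 * w 6 + u 5 * w 3 - u 6 * w 4 - v 0 * w 2 + v 2 * w 0 + v 3 * w 5 - v 4 * w 6 - v 5 * w 3 + v 6 * w 4) * huv + (- u 0 * v 2 + u 0 * w 2 + u 2 * v 0 - u 2 * w 0 + u 3 * v 5 - u 3 * w 5 - u 4 * v 6 + u 4 * w 6 - u 5 * v 3 + u 5 * w 3 + u 6 * v 4 - u 6 * w 4) * hvw + (- u 0 * v 2 + u 2 * v 0 + u 3 * v 5 - u 4 * v 6 - u 5 * v 3 + u 6 * v 4 - v 0 * w 2 + v 2 * w 0 + v 3 * w 5 - v 4 * w 6 - v 5 * w 3 + v 6 * w 4) * huw + (- u 1 - v 1 - w 1) * hphi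
    · simp only [cross_apply_0, cross_apply_1, cross_apply_2, cross_apply_3, cross_apply_4, cross_apply_5, cross_apply_6, chi_apply_0, chi_apply_1, chi_apply_2, chi_apply_3, chi_apply_4, chi_apply_5, chi_apply_6, PiLp.add_apply]
      linear_combination (v 0 * w 1 - v 1 * w 0 - v 3 * w 6 - v 4 * w 5 + v 5 * w 4 + v 6 * w 3) * huu + (- u 0 * w 1 + u 1 * w 0 + u 3 * w 6 + u 4 * w 5 - u 5 * w 4 - u 6 * w 3) * hvv + (u 0 * v 1 - u 1 * v 0 - u 3 * v 6 - u 4 * v 5 + u 5 * v 4 + u 6 * v 3) * hww + (- u 0 * w 1 + u 1 * w 0 + u 3 * w 6 + u 4 * w 5 - u 5 * w 4 - u 6 * w 3 + v 0 * w 1 - v 1 * w 0 - v 3 * w 6 - v 4 * w 5 + v 5 * w 4 + v 6 * w 3) * huv + (u 0 * v 1 - u 0 * w 1 - u 1 * v 0 + u 1 * w 0 - u 3 * v 6 + u 3 * w 6 - u 4 * v 5 + u 4 * w 5 + u 5 * v 4 - u 5 * w 4 + u 6 * v 3 - u 6 * w 3) * hvw + (u 0 * v 1 - u 1 * v 0 -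 u 3 * v 6 - u 4 * v 5 + u 5 * v 4 + u 6 * v 3 + v 0 * w 1 - v 1 * w 0 - v 3 * w 6 - v 4 * w 5 + v 5 * w 4 + v 6 * w 3) * huw + (- u 2 - v 2 - w 2) * hphi
    · simp only [cross_apply_0, cross_apply_1, cross_apply_2, cross_apply_3, cross_apply_4, cross_apply_5, cross_apply_6, chi_apply_0, chi_apply_1, chi_apply_2, chi_apply_3, chi_apply_4, chi_apply_5, chi_apply_6, PiLp.add_apply]
      linear_combination (- v 0 * w 4 - v 1 * w 5 + v 2 * w 6 + v 4 * w 0 + v 5 * w 1 - v 6 * w 2) * huu + (u 0 * w 4 + u 1 * w 5 - u 2 * w 6 - u 4 * w 0 - u 5 * w 1 + u 6 * w 2) * hvv + (- u 0 * v 4 - u 1 * v 5 + u 2 * v 6 + u 4 * v 0 + u 5 * v 1 - u 6 * v 2) * hww + (u 0 * w 4 + u 1 * w 5 - u 2 * w 6 - u 4 * w 0 - u 5 * w 1 + u 6 * w 2 - v 0 * w 4 - v 1 * w 5 + v 2 * w 6 + v 4 * w 0 + v 5 * w 1 - v 6 * w 2) * huv + (- u 0 * v 4 + u 0 * w 4 -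 u 1 * v 5 + u 1 * w 5 + u 2 * v 6 - u 2 * w 6 + u 4 * v 0 - u 4 * w 0 + u 5 * v 1 - u 5 * w 1 - u 6 * v 2 + u 6 * w 2) * hvw + (- u 0 * v 4 - u 1 * v 5 + u 2 * v 6 + u 4 * v 0 + u 5 * v 1 - u 6 * v 2 - v 0 * w 4 - v 1 * w 5 + v 2 * w 6 + v 4 * w 0 + v 5 * w 1 - v 6 * w 2) * huw + (- u 3 - v 3 - w 3) * hphi
    · simp only [cross_apply_0, cross_apply_1, cross_apply_2, cross_apply_3, cross_apply_4, cross_apply_5, cross_apply_6, chi_apply_0, chi_apply_1, chi_apply_2, chi_apply_3, chi_apply_4, chi_apply_5, chi_apply_6, PiLp.add_apply]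
      linear_combination (v 0 * w 3 + v 1 * w 6 + v 2 * w 5 - v 3 * w 0 - v 5 * w 2 - v 6 * w 1) * huu + (- u 0 * w 3 - u 1 * w 6 - u 2 * w 5 + u 3 * w 0 + u 5 * w 2 + u 6 * w 1) * hvv + (u 0 * v 3 + u 1 * v 6 + u 2 * v 5 - u 3 * v 0 - u 5 * v 2 - u 6 * v 1) * hww + (- u 0 * w 3 - u 1 * w 6 - u 2 * w 5 + u 3 * w 0 + u 5 * w 2 + u 6 * w 1 + v 0 * w 3 + v 1 * w 6 + v 2 * w 5 - v 3 * w 0 - v 5 * w 2 - v 6 * w 1) * huv + (u 0 * v 3 - u 0 * w 3 + u 1 * v 6 - u 1 * w 6 + u 2 * v 5 - u 2 * w 5 - u 3 * v 0 + u 3 * w 0 - u 5 * v 2 + u 5 * w 2 - u 6 * v 1 + u 6 * w 1) * hvw + (u 0 * v 3 + u 1 * v 6 + u 2 * v 5 - u 3 * v 0 - u 5 * v 2 - u 6 * v 1 + v 0 * w 3 + v 1 * w 6 + v 2 * w 5 - v 3 * w 0 - v 5 * w 2 - v 6 * w 1) * huw + (- u 4 - v 4 - w 4) * hphi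
    · simp only [cross_apply_0, cross_apply_1, cross_apply_2, cross_apply_3, cross_apply_4, cross_apply_5, cross_apply_6, chi_apply_0, chi_apply_1, chi_apply_2, chi_apply_3, chi_apply_4, chi_apply_5, chi_apply_6, PiLp.add_apply]
      linear_combination (- v 0 * w 6 + v 1 * w 3 - v 2 * w 4 - v 3 * w 1 + v 4 * w 2 + v 6 * w 0) * huu + (u 0 * w 6 - u 1 * w 3 + u 2 * w 4 + u 3 * w 1 - u 4 * w 2 - u 6 * w 0) * hvv + (- u 0 * v 6 + u 1 * v 3 - u 2 * v 4 - u 3 * v 1 + u 4 * v 2 + u 6 * v 0) * hww + (u 0 * w 6 - u 1 * w 3 + u 2 * w 4 + u 3 * w 1 - u 4 * w 2 - u 6 * w 0 - v 0 * w 6 + v 1 * w 3 - v 2 * w 4 - v 3 * w 1 + v 4 * w 2 + v 6 * w 0) * huv + (- u 0 * v 6 + u 0 * w 6 + u 1 * v 3 - u 1 * w 3 - u 2 * v 4 + u 2 * w 4 - u 3 * v 1 + u 3 * w 1 + u 4 * v 2 - u 4 * w 2 + u 6 * v 0 - u 6 * w 0) * hvw + (- u 0 * v 6 + u 1 * v 3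 - u 2 * v 4 - u 3 * v 1 + u 4 * v 2 + u 6 * v 0 - v 0 * w 6 + v 1 * w 3 - v 2 * w 4 - v 3 * w 1 + v 4 * w 2 + v 6 * w 0) * huw + (- u 5 - v 5 - w 5) * hphi
    · simp only [cross_apply_0, cross_apply_1, cross_apply_2, cross_apply_3, cross_apply_4, cross_apply_5, cross_apply_6, chi_apply_0, chi_apply_1, chi_apply_2, chi_apply_3, chi_apply_4, chi_apply_5, chi_apply_6, PiLp.add_apply]
      linear_combination (v 0 * w 5 - v 1 * w 4 - v 2 * w 3 + v 3 * w 2 + v 4 * w 1 - v 5 * w 0) * huu + (- u 0 * w 5 + u 1 * w 4 + u 2 * w 3 - u 3 * w 2 - u 4 * w 1 + u 5 * w 0) * hvv + (u 0 * v 5 - u 1 * v 4 - u 2 * v 3 + u 3 * v 2 + u 4 * v 1 - u 5 * v 0) * hww + (- u 0 * w 5 + u 1 * w 4 + u 2 * w 3 - u 3 * w 2 - u 4 * w 1 + u 5 * w 0 + v 0 * w 5 - v 1 * w 4 - v 2 * w 3 + v 3 * w 2 + v 4 * w 1 - v 5 * w 0) * huv + (u 0 * v 5 - u 0 * w 5 -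 u 1 * v 4 + u 1 * w 4 - u 2 * v 3 + u 2 * w 3 + u 3 * v 2 - u 3 * w 2 + u 4 * v 1 - u 4 * w 1 - u 5 * v 0 + u 5 * w 0) * hvw + (u 0 * v 5 - u 1 * v 4 - u 2 * v 3 + u 3 * v 2 + u 4 * v 1 - u 5 * v 0 + v 0 * w 5 - v 1 * w 4 - v 2 * w 3 + v 3 * w 2 + v 4 * w 1 - v 5 * w 0) * huw + (- u 6 - v 6 - w 6) * hphi

  constructor
  · intro a b c _
    rw [cross_smul_left, smul_smul, mul_inv_cancel₀ h3, one_smul]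
    exact part1Core u v w a b c
  · rw [cross_smul_left, key]

end
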